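/- Let U be the unit cube in Mat_{m×n}(𝔽((X^{-1}))) and μ the normalized Haar measure. For q ∈ 𝔽[X]^m and ε > 0, let B(q,ε) = {A ∈ U : ‖qA‖ < ε}, where ‖·‖ denotes distance to the nearest vector in 𝔽[X]^n. If m ≥ 2 and q, q' ∈ 𝔽[X]^m are linearly independent over 𝔽((X^{-1})), then μ(B(q,ε) ∩ B(q',ε')) = μ(B(q,ε))·μ(B(q',ε')). -/

import Mathlib

open Polynomial MeasureTheory Filter Set
open scoped Classical

noncomputable section

namespace FFapprox

variable {F : Type*} [Field F] [Fintype F]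

/-- The absolute value on `𝔽((X⁻¹))`, modelled as `LaurentSeries F` in the
variable `T = X⁻¹`: `|f| = k^(deg_X f) = k^(-order_T f)`. -/
def fabs (f : LaurentSeries F) : ℝ :=
  if f = 0 then 0 else (Fintype.card F : ℝ) ^ (-f.order)

lemma fabs_nonneg (f : LaurentSeries F) : 0 ≤ fabs f := by
  unfold fabs; split
  · exact le_refl 0
  · positivity

lemma one_le_cardF : (1 : ℝ) ≤ (Fintype.card F : ℝ) := by
  exact_mod_cast Fintype.card_pos

lemma fabs_zero : fabs (0 : LaurentSeries F) = 0 := if_pos rfl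

lemma fabs_neg (f : LaurentSeries F) : fabs (-f) = fabs f := by
  unfold fabs
  rw [HahnSeries.order_neg, neg_eq_zero]

lemma fabs_add_le (f g : LaurentSeries F) :
    fabs (f + g) ≤ max (fabs f) (fabs g) := by
  rcases eq_or_ne f 0 with rfl | hf
  · simp [fabs_zero, le_max_iff, le_refl]
  rcases eq_or_ne g 0 with rfl | hg
  · simp [fabs_zero, le_max_iff, le_refl]
  rcases eq_or_ne (f + g) 0 with hfg | hfg
  · rw [hfg, fabs_zero]
    exact le_max_of_le_left (fabs_nonneg f)
  have horder := HahnSeries.min_order_le_order_add hfg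
  unfold fabs
  rw [if_neg hf, if_neg hg, if_neg hfg, le_max_iff]
  rcases min_le_iff.mp (le_refl (min f.order g.order)) with h | h
  · rcases le_or_gt f.order g.order with hle | hlt
    · left
      refine zpow_le_zpow_right₀ one_le_cardF ?_
      simp only [neg_le_neg_iff]
      exact le_trans (by simp [min_eq_left hle]) horder
    · right
      refine zpow_le_zpow_right₀ one_le_cardF ?_
      simp only [neg_le_neg_iff]
      exact le_trans (by simp [min_eq_right hlt.le]) horder
  · rcases le_or_gt f.order g.order with hle | hlt
    · left
      refine zpow_le_zpow_right₀ one_le_cardF ?_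
      simp only [neg_le_neg_iff]
      exact le_trans (by simp [min_eq_left hle]) horder
    · right
      refine zpow_le_zpow_right₀ one_le_cardF ?_
      simp only [neg_le_neg_iff]
      exact le_trans (by simp [min_eq_right hlt.le]) horder

instance : MetricSpace (LaurentSeries F) where
  dist f g := fabs (f - g)
  dist_self f := by simp [fabs_zero]
  dist_comm f g := by
    have : g - f = -(f - g) := by ring
    show fabs (f - g) = fabs (g - f)
    rw [this, fabs_neg]
  dist_triangle f g h := by
    have : f - h = (f - g) + (g - h) := by ring
    show fabs (f - h) ≤ fabs (f - g) + fabs (g - h)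
    rw [this]
    refine le_trans (fabs_add_le _ _) ?_
    rw [max_le_iff]
    constructor
    · exact le_add_of_nonneg_right (fabs_nonneg _)
    · exact le_add_of_nonneg_left (fabs_nonneg _)
  eq_of_dist_eq_zero := by
    intro f g hfg
    by_contra hne
    have hsub : f - g ≠ 0 := sub_ne_zero.mpr hne
    change fabs (f - g) = 0 at hfg
    unfold fabs at hfg
    rw [if_neg hsub] at hfg
    have : (0:ℝ) < (Fintype.card F : ℝ) ^ (-(f-g).order) := by positivity
    linarith

instance : MeasurableSpace (LaurentSeries F) := borel _

instance : BorelSpace (LaurentSeries F) := ⟨rfl⟩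

/-- The embedding of `𝔽[X]` into `𝔽((X⁻¹))`, sending `X` to `T⁻¹`. -/
def pe : Polynomial F →ₐ[F] LaurentSeries F :=
  Polynomial.aeval (HahnSeries.single (-1 : ℤ) (1 : F))

/-- `|q| = k^(deg q)` on polynomials. -/
def pabs (q : Polynomial F) : ℝ :=
  if q = 0 then 0 else (Fintype.card F : ℝ) ^ q.natDegree

/-- sup-norm of a polynomial vector. -/
def qnorm {m : ℕ} (q : Fin m → Polynomial F) : ℝ := ⨆ i, pabs (q i)

/-- sup-norm of a vector of Laurent series. -/
def vnorm {n : ℕ} (v : Fin n → LaurentSeries F) : ℝ := ⨆ i, fabs (v i)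

/-- sup-norm of a matrix. -/
def mnorm {m n : ℕ} (A : Fin m → Fin n → LaurentSeries F) : ℝ := ⨆ i, vnorm (A i)

/-- Distance of a vector to the nearest polynomial vector. -/
def pdist {n : ℕ} (v : Fin n → LaurentSeries F) : ℝ :=
  ⨅ p : Fin n → Polynomial F, vnorm (fun i => v i - pe (p i))

/-- matrix product `q A` of a polynomial row vector with a Laurent-series matrix. -/
def mulVec {m n : ℕ} (q : Fin m → Polynomial F) (A : Fin m → Fin n → LaurentSeries F) :
    Fin n → LaurentSeries F :=
  fun j => ∑ i, pe (q i) * A i j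

/-- The unit cube in the space of `m × n` matrices. -/
def U (F : Type*) [Field F] [Fintype F] (m n : ℕ) : Set (Fin m → Fin n → LaurentSeries F) :=
  {A | ∀ i j, fabs (A i j) < 1}

/-- The exponent of convergence `v(S)`. -/
def expConv {m : ℕ} (S : Set (Fin m → Polynomial F)) : ℝ :=
  sInf {v : ℝ | Summable fun q : S => qnorm (q : Fin m → Polynomial F) ^ (-v)}

/-- The set `W_S(m,n;ψ)`. -/
def WS {m n : ℕ} (S : Set (Fin m → Polynomial F))
    (ψ : (Fin m → Polynomial F) → ℝ) : Set (Fin m → Fin n → LaurentSeries F) :=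
  {A | {q ∈ S | pdist (mulVec q A) < ψ q}.Infinite}


open scoped ENNReal NNReal

/-- The polynomial Euler totient `Φ(q)`. -/
def Phi (q : Polynomial F) : ℕ :=
  Nat.card {q' : Polynomial F // pabs q' < pabs q ∧ q'.Monic ∧ IsCoprime q q'}

/-- The unit cube in `𝔽((X⁻¹))ⁿ`. -/
def U1 (F : Type*) [Field F] [Fintype F] (n : ℕ) : Set (Fin n → LaurentSeries F) :=
  {A | ∀ i, fabs (A i) < 1}

/-- `B(q,ε) = {A ∈ U : ‖qA‖ < ε}`. -/
def BallB {m n : ℕ} (q : Fin m → Polynomial F) (ε : ℝ) :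
    Set (Fin m → Fin n → LaurentSeries F) :=
  {A ∈ U F m n | pdist (mulVec q A) < ε}

/-- `B'(q,ε)` (one-dimensional case, with coprimality). -/
def BallB' {n : ℕ} (q : Polynomial F) (ε : ℝ) : Set (Fin n → LaurentSeries F) :=
  {A ∈ U1 F n | ∃ p : Fin n → Polynomial F, (∀ i, IsCoprime q (p i)) ∧
    vnorm (fun i => pe q * A i - pe (p i)) < ε}

/-- gcd of the coordinates of a polynomial vector. -/
def gcdv {m : ℕ} (q : Fin m → Polynomial F) : Polynomial F := Finset.univ.gcd q

/-- `B''(q,ε)` (higher-dimensional case, with coprimality to the gcd of coordinates). -/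
def BallB'' {m n : ℕ} (q : Fin m → Polynomial F) (ε : ℝ) :
    Set (Fin m → Fin n → LaurentSeries F) :=
  {A ∈ U F m n | ∃ p : Fin n → Polynomial F, (∀ j, IsCoprime (gcdv q) (p j)) ∧
    vnorm (fun j => mulVec q A j - pe (p j)) < ε}

/-- The resonant affine subspace `H(q,p) = {A ∈ U : qA = p}`. -/
def Hqp {m n : ℕ} (q : Fin m → Polynomial F) (p : Fin n → Polynomial F) :
    Set (Fin m → Fin n → LaurentSeries F) :=
  {A ∈ U F m n | mulVec q A = fun j => pe (p j)}

/-- The counting function `C(N;S)`. -/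
def CountS {m : ℕ} (S : Set (Fin m → Polynomial F)) (N : ℕ) : ℕ :=
  Nat.card {q : Fin m → Polynomial F // q ∈ S ∧ qnorm q ≤ N}

/-- The growth exponent `γ(S)`. -/
def gammaS {m : ℕ} (S : Set (Fin m → Polynomial F)) : ℝ :=
  sSup {γ : ℝ | 0 < Filter.atTop.limsup (fun N : ℕ => (CountS S N : ℝ≥0∞) * (N : ℝ≥0∞) ^ (-γ))}

/-- The exponent `η(ψ)`. -/
def etaExp {m : ℕ} (n : ℕ) (ψ : (Fin m → Polynomial F) → ℝ) : ℝ :=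
  sInf {η : ℝ | Summable (fun q : Fin m → Polynomial F => qnorm q ^ n * (ψ q / qnorm q) ^ η)}

/-- The exponent of convergence of `S ⊆ 𝔽[X]` (one-dimensional). -/
def expConv1 (S : Set (Polynomial F)) : ℝ :=
  sInf {v : ℝ | Summable fun q : S => pabs (q : Polynomial F) ^ (-v)}



/-! ### Auxiliary lemmas -/

lemma one_lt_cardF : (1 : ℝ) < (Fintype.card F : ℝ) := by
  exact_mod_cast Fintype.one_lt_card

/-- All coefficients up to `d` vanish. -/
def Zle (d : ℤ) (f : LaurentSeries F) : Prop := ∀ t : ℤ, t ≤ d → f.coeff t = 0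

lemma zle_iff_order {f : LaurentSeries F} (hf : f ≠ 0) (d : ℤ) :
    Zle d f ↔ d < f.order := by
  constructor
  · intro h
    by_contra hlt
    push_neg at hlt
    exact hf (HahnSeries.coeff_order_eq_zero.mp (h _ hlt))
  · intro h t ht
    exact HahnSeries.coeff_eq_zero_of_lt_order (lt_of_le_of_lt ht h)

lemma fabs_le_iff_zle (d : ℤ) (f : LaurentSeries F) :
    fabs f ≤ (Fintype.card F : ℝ) ^ (-d - 1) ↔ Zle d f := by
  rcases eq_or_ne f 0 with rfl | hf
  · simp only [fabs_zero, Zle, HahnSeries.coeff_zero, implies_true, iff_true]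
    positivity
  · unfold fabs
    rw [if_neg hf, zle_iff_order hf]
    rw [show (-d - 1 : ℤ) = -(d + 1) by ring]
    rw [zpow_le_zpow_iff_right₀ (one_lt_cardF (F := F)), neg_le_neg_iff]
    omega

lemma fabs_lt_one_iff (f : LaurentSeries F) : fabs f < 1 ↔ Zle 0 f := by
  rw [← fabs_le_iff_zle]
  constructor
  · intro h
    rcases eq_or_ne f 0 with rfl | hf
    · rw [fabs_zero]; positivity
    · unfold fabs at h ⊢
      rw [if_neg hf] at h ⊢
      rw [show (1:ℝ) = (Fintype.card F : ℝ) ^ (0:ℤ) by simp] at h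
      rw [zpow_lt_zpow_iff_right₀ (one_lt_cardF (F := F))] at h
      exact zpow_le_zpow_right₀ (le_of_lt (one_lt_cardF (F := F))) (by omega)
  · intro h
    refine lt_of_le_of_lt h ?_
    rw [show (1:ℝ) = (Fintype.card F : ℝ) ^ (0:ℤ) by simp]
    rw [zpow_lt_zpow_iff_right₀ (one_lt_cardF (F := F))]
    omega

/-- There is a "threshold exponent" for each positive radius. -/
lemma exists_threshold {ε : ℝ} (hε : 0 < ε) :
    ∃ d : ℤ, ∀ f : LaurentSeries F, fabs f < ε ↔ Zle d f := by
  have hk := one_lt_cardF (F := F)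
  have hk0 : (0:ℝ) < (Fintype.card F : ℝ) := lt_trans one_pos hk
  -- greatest t with k^t < ε
  have hbdd : ∃ b : ℤ, ∀ t : ℤ, (Fintype.card F : ℝ) ^ t < ε → t ≤ b := by
    obtain ⟨N, hN⟩ := pow_unbounded_of_one_lt ε hk
    refine ⟨N, fun t ht => ?_⟩
    by_contra hgt
    push_neg at hgt
    have : (Fintype.card F : ℝ) ^ (N:ℤ) ≤ (Fintype.card F : ℝ) ^ t :=
      zpow_le_zpow_right₀ (le_of_lt hk) (by omega)
    rw [zpow_natCast] at this
    linarith
  have hinh : ∃ t : ℤ, (Fintype.card F : ℝ) ^ t < ε := by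
    obtain ⟨N, hN⟩ := pow_unbounded_of_one_lt ε⁻¹ hk
    refine ⟨-(N:ℤ), ?_⟩
    rw [zpow_neg, zpow_natCast]
    rw [inv_lt_iff_one_lt_mul₀ (by positivity)]
    calc (1:ℝ) = ε * ε⁻¹ := by field_simp
    _ < ε * (Fintype.card F : ℝ) ^ N := by
        exact mul_lt_mul_of_pos_left hN hε
  obtain ⟨t₀, ht₀, ht₀max⟩ := Int.exists_greatest_of_bdd
    (P := fun t : ℤ => (Fintype.card F : ℝ) ^ t < ε) hbdd hinh
  · refine ⟨-t₀ - 1, fun f => ?_⟩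
    rw [← fabs_le_iff_zle]
    have : (-(-t₀ - 1) - 1 : ℤ) = t₀ := by ring
    rw [this]
    constructor
    · intro h
      rcases eq_or_ne f 0 with rfl | hf
      · rw [fabs_zero]; positivity
      · unfold fabs at h ⊢
        rw [if_neg hf] at h ⊢
        exact zpow_le_zpow_right₀ (le_of_lt hk) (ht₀max _ h)
    · intro h
      exact lt_of_le_of_lt h ht₀

lemma algebraMap_single (a : F) :
    (algebraMap F (LaurentSeries F)) a = HahnSeries.single 0 a := by
  rw [HahnSeries.algebraMap_apply', PowerSeries.algebraMap_apply, Algebra.algebraMap_self,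
    RingHom.id_apply, HahnSeries.ofPowerSeries_C, HahnSeries.C_apply]

lemma single_intpow (d : ℕ) :
    (HahnSeries.single (-1 : ℤ) (1 : F)) ^ d = HahnSeries.single (-(d:ℤ)) (1 : F) := by
  induction d with
  | zero => simp [HahnSeries.single_zero_one]
  | succ d ih =>
      rw [pow_succ, ih, HahnSeries.single_mul_single, mul_one]
      congr 1
      push_cast
      ring

lemma pe_monomial (d : ℕ) (a : F) :
    pe (Polynomial.monomial d a) = HahnSeries.single (-(d:ℤ)) a := by
  unfold pe
  rw [Polynomial.aeval_monomial, single_intpow, algebraMap_single,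
    HahnSeries.single_mul_single, zero_add, mul_one]

lemma coeff_finsum {ι : Type*} (s : Finset ι) (f : ι → LaurentSeries F) (t : ℤ) :
    (∑ i ∈ s, f i).coeff t = ∑ i ∈ s, (f i).coeff t := by
  classical
  induction s using Finset.cons_induction with
  | empty => simp
  | cons a s ha ih => rw [Finset.sum_cons, Finset.sum_cons, HahnSeries.coeff_add, ih]

lemma pe_coeff (p : Polynomial F) (t : ℤ) :
    (pe p).coeff t = if 0 ≤ -t then p.coeff (-t).toNat else 0 := by
  conv_lhs => rw [p.as_sum_support]
  rw [map_sum, coeff_finsum]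
  simp only [pe_monomial, HahnSeries.coeff_single]
  rcases le_or_gt 0 (-t) with h | h
  · rw [if_pos h]
    by_cases hmem : (-t).toNat ∈ p.support
    · rw [Finset.sum_eq_single_of_mem ((-t).toNat) hmem ?_]
      · rw [if_pos (by omega)]
      · intro b _ hb
        rw [if_neg (by omega)]
    · rw [Finset.sum_eq_zero ?_, eq_comm]
      · exact Polynomial.notMem_support_iff.mp hmem
      · intro i hi
        rw [if_neg ?_]
        intro hti
        exact hmem (by rwa [show (-t).toNat = i by omega])
  · rw [if_neg (by omega)]
    refine Finset.sum_eq_zero (fun i _ => ?_)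
    rw [if_neg (by omega)]

lemma pe_coeff_pos (p : Polynomial F) {t : ℤ} (ht : 1 ≤ t) : (pe p).coeff t = 0 := by
  rw [pe_coeff, if_neg (by omega)]

/-- The polynomial matching the low (nonpositive-exponent) part of `f`. -/
def lowPoly (f : LaurentSeries F) : Polynomial F :=
  ∑ d ∈ Finset.range (1 - f.order).toNat, Polynomial.monomial d (f.coeff (-(d:ℤ)))

lemma pe_lowPoly_coeff (f : LaurentSeries F) (t : ℤ) :
    (pe (lowPoly f)).coeff t = if t ≤ 0 then f.coeff t else 0 := by
  unfold lowPoly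
  rw [map_sum, coeff_finsum]
  simp only [pe_monomial, HahnSeries.coeff_single]
  rcases le_or_gt t 0 with h | h
  · rw [if_pos h]
    by_cases hmem : (-t).toNat ∈ Finset.range (1 - f.order).toNat
    · rw [Finset.sum_eq_single_of_mem ((-t).toNat) hmem ?_]
      · rw [if_pos (by omega)]
        congr 1
        omega
      · intro b _ hb
        rw [if_neg (by omega)]
    · rw [Finset.sum_eq_zero ?_, eq_comm]
      · rw [Finset.mem_range] at hmem
        push_neg at hmem
        rcases eq_or_ne f 0 with rfl | hf
        · simp
        · exact HahnSeries.coeff_eq_zero_of_lt_order (by omega)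
      · intro i hi
        rw [Finset.mem_range] at hi
        rw [Finset.mem_range] at hmem
        rw [if_neg ?_]
        intro hti
        exact hmem (by omega)
  · rw [if_neg (by omega)]
    refine Finset.sum_eq_zero (fun i _ => ?_)
    rw [if_neg (by omega)]

lemma isOpen_coeff_eq (t : ℤ) (a : F) : IsOpen {f : LaurentSeries F | f.coeff t = a} := by
  letI : UniformSpace F := ⊥
  haveI : DiscreteTopology F := ⟨rfl⟩
  exact (isOpen_discrete {a}).preimage (LaurentSeries.uniformContinuous_coeff t).continuous

lemma measurableSet_coeff (t : ℤ) (a : F) :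
    MeasurableSet {f : LaurentSeries F | f.coeff t = a} :=
  (isOpen_coeff_eq t a).measurableSet

lemma measurableSet_fabs_lt_one :
    MeasurableSet {f : LaurentSeries F | fabs f < 1} := by
  have h : {f : LaurentSeries F | fabs f < 1}
      = ⋂ (t : ℤ), ⋂ (_ : t ≤ 0), {f : LaurentSeries F | f.coeff t = 0} := by
    ext f
    simp only [Set.mem_setOf_eq, Set.mem_iInter, fabs_lt_one_iff]
    rfl
  rw [h]
  exact MeasurableSet.iInter fun t => MeasurableSet.iInter fun _ => measurableSet_coeff t 0

lemma measurable_entry {m n : ℕ} (i : Fin m) (j : Fin n) :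
    Measurable (fun A : Fin m → Fin n → LaurentSeries F => A i j) :=
  (measurable_pi_apply j).comp (measurable_pi_apply i)

lemma measurableSet_U {m n : ℕ} : MeasurableSet (U F m n) := by
  have h : U F m n = ⋂ (i : Fin m), ⋂ (j : Fin n),
      (fun A : Fin m → Fin n → LaurentSeries F => A i j) ⁻¹'
        {f : LaurentSeries F | fabs f < 1} := by
    ext A
    simp only [U, Set.mem_setOf_eq, Set.mem_iInter, Set.mem_preimage]
  rw [h]
  exact MeasurableSet.iInter fun i => MeasurableSet.iInter fun j =>
    (measurable_entry i j) measurableSet_fabs_lt_one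

instance : MeasurableAdd (LaurentSeries F) := by
  constructor
  · intro c
    exact (continuous_add_left c).measurable
  · intro c
    exact (continuous_add_right c).measurable

lemma U_add_mem {m n : ℕ} {A B : Fin m → Fin n → LaurentSeries F}
    (hA : A ∈ U F m n) (hB : B ∈ U F m n) : A + B ∈ U F m n := by
  intro i j
  have h := fabs_add_le (A i j) (B i j)
  have : (A + B) i j = A i j + B i j := rfl
  rw [this]
  exact lt_of_le_of_lt h (max_lt (hA i j) (hB i j))

lemma U_neg_mem {m n : ℕ} {A : Fin m → Fin n → LaurentSeries F}
    (hA : A ∈ U F m n) : -A ∈ U F m n := by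
  intro i j
  have : (-A) i j = -(A i j) := rfl
  rw [this, fabs_neg]
  exact hA i j

lemma measure_translate {m n : ℕ} (μ : Measure (Fin m → Fin n → LaurentSeries F))
    [μ.IsAddLeftInvariant] (x : Fin m → Fin n → LaurentSeries F)
    (s : Set (Fin m → Fin n → LaurentSeries F)) :
    μ ((fun y => x + y) '' s) = μ s := by
  have h : (fun y => x + y) '' s = (fun y => -x + y) ⁻¹' s := by
    ext z
    simp only [Set.mem_image, Set.mem_preimage]
    constructor
    · rintro ⟨w, hw, rfl⟩
      simpa [← add_assoc] using hw
    · intro hz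
      exact ⟨-x + z, hz, by rw [← add_assoc]; simp⟩
  have h2 : (fun y => -x + y) = ⇑(MeasurableEquiv.addLeft (-x)) := by
    funext y
    simp [MeasurableEquiv.addLeft]
  rw [h, h2, ← MeasurableEquiv.map_apply (MeasurableEquiv.addLeft (-x)) s, ← h2,
    map_add_left_eq_self μ (-x)]

lemma measure_fiber {m n : ℕ} {G : Type*} [AddCommGroup G] [Fintype G]
    (μ : Measure (Fin m → Fin n → LaurentSeries F)) (hinv : μ.IsAddLeftInvariant)
    (hU : μ (U F m n) = 1)
    (Φ : (Fin m → Fin n → LaurentSeries F) → G)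
    (hadd : ∀ x y, Φ (x + y) = Φ x + Φ y)
    (hmeas : ∀ g : G, MeasurableSet (U F m n ∩ Φ ⁻¹' {g}))
    (hsurj : ∀ g : G, ∃ A ∈ U F m n, Φ A = g) :
    ∀ g : G, μ (U F m n ∩ Φ ⁻¹' {g}) = (Fintype.card G : ENNReal)⁻¹ := by
  haveI := hinv
  have h0 : Φ 0 = 0 := by
    have := hadd 0 0
    rw [add_zero] at this
    exact left_eq_add.mp this
  have hneg : ∀ x, Φ (-x) = -Φ x := by
    intro x
    have := hadd x (-x)
    rw [add_neg_cancel, h0] at this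
    exact (neg_eq_of_add_eq_zero_right this.symm).symm
  have hconst : ∀ g : G, μ (U F m n ∩ Φ ⁻¹' {g}) = μ (U F m n ∩ Φ ⁻¹' {0}) := by
    intro g
    obtain ⟨Ag, hAgU, hAg⟩ := hsurj g
    have him : U F m n ∩ Φ ⁻¹' {g} = (fun y => Ag + y) '' (U F m n ∩ Φ ⁻¹' {0}) := by
      ext X
      simp only [Set.mem_inter_iff, Set.mem_preimage, Set.mem_singleton_iff, Set.mem_image]
      constructor
      · rintro ⟨hXU, hXg⟩
        refine ⟨X + (-Ag), ⟨U_add_mem hXU (U_neg_mem hAgU), ?_⟩, by abel⟩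
        rw [hadd, hneg, hXg, hAg, add_neg_cancel]
      · rintro ⟨z, ⟨hzU, hz0⟩, rfl⟩
        exact ⟨U_add_mem hAgU hzU, by rw [hadd, hAg, hz0, add_zero]⟩
    rw [him, measure_translate]
  have hUeq : U F m n = ⋃ g : G, (U F m n ∩ Φ ⁻¹' {g}) := by
    ext A
    simp only [Set.mem_iUnion, Set.mem_inter_iff, Set.mem_preimage, Set.mem_singleton_iff]
    exact ⟨fun hA => ⟨Φ A, hA, rfl⟩, fun ⟨g, hA, _⟩ => hA⟩
  have hdisj : Pairwise (Function.onFun Disjoint fun g : G => U F m n ∩ Φ ⁻¹' {g}) := by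
    intro g g' hgg'
    rw [Function.onFun, Set.disjoint_left]
    rintro A ⟨_, hg⟩ ⟨_, hg'⟩
    rw [Set.mem_preimage, Set.mem_singleton_iff] at hg hg'
    exact hgg' (hg ▸ hg' ▸ rfl)
  have hsum : (Fintype.card G : ENNReal) * μ (U F m n ∩ Φ ⁻¹' {0}) = 1 := by
    rw [← hU]
    conv_rhs => rw [hUeq]
    rw [measure_iUnion hdisj hmeas, tsum_fintype]
    rw [Finset.sum_congr rfl (fun g _ => hconst g), Finset.sum_const, Finset.card_univ,
      nsmul_eq_mul]
  have hne : (Fintype.card G : ENNReal) ≠ 0 := by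
    simp [Fintype.card_ne_zero]
  have hnetop : (Fintype.card G : ENNReal) ≠ ⊤ := ENNReal.natCast_ne_top _
  intro g
  rw [hconst g]
  calc μ (U F m n ∩ Φ ⁻¹' {0})
      = (Fintype.card G : ENNReal)⁻¹ * ((Fintype.card G : ENNReal) * μ (U F m n ∩ Φ ⁻¹' {0})) := by
        rw [← mul_assoc, ENNReal.inv_mul_cancel hne hnetop, one_mul]
    _ = (Fintype.card G : ENNReal)⁻¹ := by rw [hsum, mul_one]

lemma pe_mul_coeff (p : Polynomial F) (f : LaurentSeries F) (t : ℤ) :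
    (pe p * f).coeff t = ∑ d ∈ p.support, p.coeff d * f.coeff (t + (d:ℤ)) := by
  conv_lhs => rw [p.as_sum_support, map_sum, Finset.sum_mul]
  rw [coeff_finsum]
  refine Finset.sum_congr rfl (fun d _ => ?_)
  rw [pe_monomial]
  conv_lhs => rw [show (t:ℤ) = (t + d) + -(d:ℤ) by ring]
  exact HahnSeries.coeff_single_mul_add

lemma mulVec_coeff {m n : ℕ} (q : Fin m → Polynomial F)
    (A : Fin m → Fin n → LaurentSeries F) (j : Fin n) (t : ℤ) :
    (mulVec q A j).coeff t
      = ∑ i, ∑ d ∈ (q i).support, (q i).coeff d * (A i j).coeff (t + (d:ℤ)) := by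
  unfold mulVec
  rw [coeff_finsum]
  exact Finset.sum_congr rfl (fun i _ => pe_mul_coeff _ _ _)

lemma mulVec_coeff' {m n : ℕ} (q : Fin m → Polynomial F) (N : ℕ)
    (hN : ∀ i, (q i).support ⊆ Finset.range N)
    (A : Fin m → Fin n → LaurentSeries F) (j : Fin n) (t : ℤ) :
    (mulVec q A j).coeff t
      = ∑ i, ∑ d : Fin N, (q i).coeff d * (A i j).coeff (t + (d:ℤ)) := by
  rw [mulVec_coeff]
  refine Finset.sum_congr rfl (fun i _ => ?_)
  rw [Fin.sum_univ_eq_sum_range (fun d => (q i).coeff d * (A i j).coeff (t + (d:ℤ))) N]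
  refine Finset.sum_subset (hN i) (fun d _ hd => ?_)
  rw [Polynomial.notMem_support_iff.mp hd, zero_mul]

lemma measurableSet_mulVec_coeff {m n : ℕ} (q : Fin m → Polynomial F) (j : Fin n)
    (t : ℤ) (c : F) :
    MeasurableSet {A : Fin m → Fin n → LaurentSeries F | (mulVec q A j).coeff t = c} := by
  set N : ℕ := (Finset.univ.sup fun i => (q i).natDegree) + 1 with hNdef
  have hN : ∀ i, (q i).support ⊆ Finset.range N := by
    intro i d hd
    rw [Finset.mem_range]
    have h1 : d ≤ (q i).natDegree := Polynomial.le_natDegree_of_mem_supp d hd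
    have h2 : (q i).natDegree ≤ Finset.univ.sup fun i => (q i).natDegree :=
      Finset.le_sup (f := fun i => (q i).natDegree) (Finset.mem_univ i)
    omega
  have hset : {A : Fin m → Fin n → LaurentSeries F | (mulVec q A j).coeff t = c}
      = ⋃ (v : Fin m → Fin N → F)
          (_ : ∑ i, ∑ d : Fin N, (q i).coeff d * v i d = c),
          ⋂ (i : Fin m), ⋂ (d : Fin N),
            {A : Fin m → Fin n → LaurentSeries F | (A i j).coeff (t + (d:ℤ)) = v i d} := by
    ext A
    simp only [Set.mem_setOf_eq, Set.mem_iUnion, Set.mem_iInter]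
    constructor
    · intro hA
      refine ⟨fun i d => (A i j).coeff (t + (d:ℤ)), ?_, fun i d => rfl⟩
      rw [← hA, mulVec_coeff' q N hN]
    · rintro ⟨v, hvc, hv⟩
      rw [mulVec_coeff' q N hN]
      rw [← hvc]
      exact Finset.sum_congr rfl fun i _ => Finset.sum_congr rfl fun d _ => by rw [hv i d]
  rw [hset]
  refine MeasurableSet.iUnion fun v => MeasurableSet.iUnion fun _ => ?_
  exact MeasurableSet.iInter fun i => MeasurableSet.iInter fun d =>
    (measurable_entry i j) (measurableSet_coeff (t + (d:ℤ)) (v i d))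

lemma mulVec_add {m n : ℕ} (q : Fin m → Polynomial F)
    (A B : Fin m → Fin n → LaurentSeries F) :
    mulVec q (A + B) = mulVec q A + mulVec q B := by
  funext j
  show (∑ i, pe (q i) * (A + B) i j) = (∑ i, pe (q i) * A i j) + ∑ i, pe (q i) * B i j
  rw [← Finset.sum_add_distrib]
  refine Finset.sum_congr rfl fun i _ => ?_
  show pe (q i) * (A i j + B i j) = _
  rw [mul_add]

lemma vnorm_nonneg {n : ℕ} (v : Fin n → LaurentSeries F) : 0 ≤ vnorm v :=
  Real.iSup_nonneg (fun i => fabs_nonneg (v i))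

lemma le_vnorm {n : ℕ} (v : Fin n → LaurentSeries F) (j : Fin n) : fabs (v j) ≤ vnorm v := by
  unfold vnorm
  exact le_ciSup (Set.Finite.bddAbove (Set.finite_range fun i => fabs (v i))) j

lemma pdist_lt_iff {n : ℕ} (hn : 0 < n) {ε : ℝ} (hε : 0 < ε) {d : ℤ}
    (hd : ∀ f : LaurentSeries F, fabs f < ε ↔ Zle d f) (v : Fin n → LaurentSeries F) :
    pdist v < ε ↔ ∀ j, ∀ t : ℤ, 1 ≤ t → t ≤ d → (v j).coeff t = 0 := by
  haveI : Nonempty (Fin n) := ⟨⟨0, hn⟩⟩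
  constructor
  · intro h
    obtain ⟨p, hp⟩ := exists_lt_of_ciInf_lt h
    intro j t ht1 ht2
    have hj : fabs (v j - pe (p j)) < ε :=
      lt_of_le_of_lt (le_vnorm (fun i => v i - pe (p i)) j) hp
    have hz := (hd _).mp hj t ht2
    rw [HahnSeries.coeff_sub, pe_coeff_pos _ ht1, sub_zero] at hz
    exact hz
  · intro h
    have hkd : fabs (HahnSeries.single (d+1) (1:F)) < ε := by
      refine (hd _).mpr (fun t ht => ?_)
      rw [HahnSeries.coeff_single, if_neg (by omega)]
    have hkval : fabs (HahnSeries.single (d+1) (1:F))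
        = (Fintype.card F : ℝ) ^ (-d - 1) := by
      unfold fabs
      rw [if_neg (by simp), HahnSeries.order_single one_ne_zero]
      congr 1
      ring
    set p : Fin n → Polynomial F := fun j => lowPoly (v j) with hp
    have hzle : ∀ j, Zle d (v j - pe (p j)) := by
      intro j t ht
      rw [HahnSeries.coeff_sub, hp, pe_lowPoly_coeff]
      rcases le_or_gt t 0 with h0 | h0
      · rw [if_pos h0, sub_self]
      · rw [if_neg (by omega), sub_zero]
        exact h j t (by omega) ht
    have hle : vnorm (fun j => v j - pe (p j)) ≤ (Fintype.card F : ℝ) ^ (-d - 1) := by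
      refine ciSup_le (fun j => ?_)
      exact (fabs_le_iff_zle d _).mpr (hzle j)
    refine lt_of_le_of_lt (ciInf_le ?_ p) (lt_of_le_of_lt hle ?_)
    · refine ⟨0, ?_⟩
      rintro x ⟨p', rfl⟩
      exact vnorm_nonneg _
    · rw [← hkval]
      exact hkd

lemma exists_dual_pair {m : ℕ} (Q Q' : Fin m → LaurentSeries F)
    (hli : LinearIndependent (LaurentSeries F) ![Q, Q']) :
    ∃ v w : Fin m → LaurentSeries F,
      (∑ i, Q i * v i = 1) ∧ (∑ i, Q' i * v i = 0) ∧
      (∑ i, Q i * w i = 0) ∧ (∑ i, Q' i * w i = 1) := by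
  classical
  let T : (Fin 2 → LaurentSeries F) →ₗ[LaurentSeries F] (Fin m → LaurentSeries F) :=
    { toFun := fun c => fun i => c 0 * Q i + c 1 * Q' i
      map_add' := by
        intro a b
        funext i
        show (a 0 + b 0) * Q i + (a 1 + b 1) * Q' i
          = (a 0 * Q i + a 1 * Q' i) + (b 0 * Q i + b 1 * Q' i)
        ring
      map_smul' := by
        intro r a
        funext i
        show (r * a 0) * Q i + (r * a 1) * Q' i = r * (a 0 * Q i + a 1 * Q' i)
        ring }
  have hker : LinearMap.ker T = ⊥ := by
    rw [LinearMap.ker_eq_bot']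
    intro c hc
    have hc' : ∀ i, c 0 * Q i + c 1 * Q' i = 0 := by
      intro i
      exact congrFun hc i
    have h2 := Fintype.linearIndependent_iff.mp hli c ?_
    · funext i
      exact h2 i
    · rw [Fin.sum_univ_two]
      funext i
      have h3 := hc' i
      simpa using h3
  obtain ⟨g, hg⟩ := LinearMap.exists_leftInverse_of_injective T hker
  have hgT : ∀ c, g (T c) = c := fun c => by
    have := LinearMap.ext_iff.mp hg c
    simpa using this
  have hTQ : T ![1, 0] = Q := by
    funext i
    show (1 : LaurentSeries F) * Q i + (0 : LaurentSeries F) * Q' i = Q i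
    ring
  have hTQ' : T ![0, 1] = Q' := by
    funext i
    show (0 : LaurentSeries F) * Q i + (1 : LaurentSeries F) * Q' i = Q' i
    ring
  have hgQ : g Q = ![1, 0] := by rw [← hTQ, hgT]
  have hgQ' : g Q' = ![0, 1] := by rw [← hTQ', hgT]
  have key : ∀ (φ : (Fin m → LaurentSeries F) →ₗ[LaurentSeries F] LaurentSeries F)
      (x : Fin m → LaurentSeries F),
      ∑ i, x i * φ (fun j => if i = j then 1 else 0) = φ x := by
    intro φ x
    rw [LinearMap.pi_apply_eq_sum_univ φ x]
    exact Finset.sum_congr rfl fun i _ => by rw [smul_eq_mul]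
  let φ0 : (Fin m → LaurentSeries F) →ₗ[LaurentSeries F] LaurentSeries F :=
    (LinearMap.proj (0 : Fin 2)).comp g
  let φ1 : (Fin m → LaurentSeries F) →ₗ[LaurentSeries F] LaurentSeries F :=
    (LinearMap.proj (1 : Fin 2)).comp g
  refine ⟨fun i => φ0 (fun j => if i = j then 1 else 0),
          fun i => φ1 (fun j => if i = j then 1 else 0), ?_, ?_, ?_, ?_⟩
  · rw [key φ0 Q]
    show (g Q) 0 = 1
    rw [hgQ]
    rfl
  · rw [key φ0 Q']
    show (g Q') 0 = 0
    rw [hgQ']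
    rfl
  · rw [key φ1 Q]
    show (g Q) 1 = 0
    rw [hgQ]
    rfl
  · rw [key φ1 Q']
    show (g Q') 1 = 1
    rw [hgQ']
    rfl

lemma coeff_icc_sum (D : ℤ) (c : ℤ → F) {t : ℤ} (h1 : 1 ≤ t) (h2 : t ≤ D) :
    (∑ s ∈ Finset.Icc (1:ℤ) D, HahnSeries.single s (c s)).coeff t = c t := by
  rw [coeff_finsum]
  rw [Finset.sum_eq_single_of_mem t (Finset.mem_Icc.mpr ⟨h1, h2⟩) ?_]
  · rw [HahnSeries.coeff_single_same]
  · intro b _ hb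
    rw [HahnSeries.coeff_single, if_neg hb.symm]

lemma coeff_icc_sum_pos (D : ℤ) (c : ℤ → F) {t : ℤ} (h1 : 1 ≤ t) :
    (∑ s ∈ Finset.Icc (1:ℤ) D, HahnSeries.single s (c s)).coeff t
      = if t ≤ D then c t else 0 := by
  split
  · exact coeff_icc_sum D c h1 (by assumption)
  · rw [coeff_finsum]
    refine Finset.sum_eq_zero (fun s hs => ?_)
    rw [Finset.mem_Icc] at hs
    rw [HahnSeries.coeff_single, if_neg (by omega)]

lemma exists_target {m n : ℕ} (q q' : Fin m → Polynomial F)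
    (hli : LinearIndependent (LaurentSeries F)
      ![(fun i => pe (q i) : Fin m → LaurentSeries F), fun i => pe (q' i)])
    (D D' : ℤ) (c c' : Fin n → ℤ → F) :
    ∃ A ∈ U F m n, ∀ j : Fin n,
      (∀ t : ℤ, 1 ≤ t → t ≤ D → (mulVec q A j).coeff t = c j t)
      ∧ (∀ t : ℤ, 1 ≤ t → t ≤ D' → (mulVec q' A j).coeff t = c' j t) := by
  classical
  obtain ⟨v, w, hv1, hv2, hw1, hw2⟩ :=
    exists_dual_pair (fun i => pe (q i)) (fun i => pe (q' i)) hli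
  set u : Fin n → LaurentSeries F :=
    fun j => ∑ s ∈ Finset.Icc (1:ℤ) D, HahnSeries.single s (c j s) with hu
  set u' : Fin n → LaurentSeries F :=
    fun j => ∑ s ∈ Finset.Icc (1:ℤ) D', HahnSeries.single s (c' j s) with hu'
  set A₀ : Fin m → Fin n → LaurentSeries F := fun i j => u j * v i + u' j * w i with hA₀
  set A : Fin m → Fin n → LaurentSeries F :=
    fun i j => A₀ i j - pe (lowPoly (A₀ i j)) with hA
  have hAcoeff : ∀ i j (t : ℤ), t ≤ 0 → (A i j).coeff t = 0 := by
    intro i j t ht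
    show (A₀ i j - pe (lowPoly (A₀ i j))).coeff t = 0
    rw [HahnSeries.coeff_sub, pe_lowPoly_coeff, if_pos ht, sub_self]
  have hAU : A ∈ U F m n := by
    intro i j
    rw [fabs_lt_one_iff]
    intro t ht
    exact hAcoeff i j t ht
  -- key computation
  have hmulA₀ : ∀ (r : Fin m → Polynomial F) (y y' : LaurentSeries F),
      (∑ i, pe (r i) * v i = y) → (∑ i, pe (r i) * w i = y') →
      ∀ j, mulVec r A j = u j * y + u' j * y'
        - pe (∑ i, r i * lowPoly (A₀ i j)) := by
    intro r y y' hy hy' j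
    unfold mulVec
    have h1 : ∀ i, pe (r i) * A i j
        = pe (r i) * A₀ i j - pe (r i) * pe (lowPoly (A₀ i j)) := by
      intro i
      show pe (r i) * (A₀ i j - pe (lowPoly (A₀ i j))) = _
      ring
    rw [Finset.sum_congr rfl (fun i _ => h1 i), Finset.sum_sub_distrib]
    congr 1
    · have h2 : ∀ i, pe (r i) * A₀ i j
          = u j * (pe (r i) * v i) + u' j * (pe (r i) * w i) := by
        intro i
        show pe (r i) * (u j * v i + u' j * w i) = _
        ring
      rw [Finset.sum_congr rfl (fun i _ => h2 i), Finset.sum_add_distrib,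
        ← Finset.mul_sum, ← Finset.mul_sum, hy, hy']
    · rw [map_sum]
      exact Finset.sum_congr rfl (fun i _ => (map_mul pe _ _).symm)
  refine ⟨A, hAU, fun j => ⟨fun t ht1 ht2 => ?_, fun t ht1 ht2 => ?_⟩⟩
  · rw [hmulA₀ q 1 0 hv1 hw1 j, HahnSeries.coeff_sub, pe_coeff_pos _ ht1, sub_zero,
      mul_one, mul_zero, add_zero, hu]
    exact coeff_icc_sum D (c j) ht1 ht2
  · rw [hmulA₀ q' 0 1 hv2 hw2 j, HahnSeries.coeff_sub, pe_coeff_pos _ ht1, sub_zero,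
      mul_zero, mul_one, zero_add, hu']
    exact coeff_icc_sum D' (c' j) ht1 ht2

/-- independence of the sets `B(q,ε)` for linearly independent `q, q'`. -/
theorem ball_independence {m n : ℕ} (hm : 2 ≤ m) (hn : 0 < n)
    (μ : Measure (Fin m → Fin n → LaurentSeries F)) (hinv : μ.IsAddLeftInvariant)
    (hU : μ (U F m n) = 1)
    (q q' : Fin m → Polynomial F)
    (hli : LinearIndependent (LaurentSeries F)
      ![(fun i => pe (q i) : Fin m → LaurentSeries F), fun i => pe (q' i)])
    (ε ε' : ℝ) (hε : 0 < ε) (hε' : 0 < ε') :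
    μ (BallB (n := n) q ε ∩ BallB q' ε') = μ (BallB (n := n) q ε) * μ (BallB (n := n) q' ε') := by
  classical
  obtain ⟨D, hD⟩ := exists_threshold (F := F) hε
  obtain ⟨D', hD'⟩ := exists_threshold (F := F) hε'
  haveI : Nonempty (Fin n) := ⟨⟨0, hn⟩⟩
  set Φ : (Fin m → Fin n → LaurentSeries F) → (Fin n → (Finset.Icc (1:ℤ) D) → F) :=
    fun A => fun j t => (mulVec q A j).coeff ↑t with hΦ
  set Φ' : (Fin m → Fin n → LaurentSeries F) → (Fin n → (Finset.Icc (1:ℤ) D') → F) :=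
    fun A => fun j t => (mulVec q' A j).coeff ↑t with hΦ'
  set Ψ : (Fin m → Fin n → LaurentSeries F) →
      (Fin n → (Finset.Icc (1:ℤ) D) → F) × (Fin n → (Finset.Icc (1:ℤ) D') → F) :=
    fun A => (Φ A, Φ' A) with hΨ
  -- additivity
  have haddΦ : ∀ (r : Fin m → Polynomial F) (X Y : Fin m → Fin n → LaurentSeries F)
      (j : Fin n) (t : ℤ), (mulVec r (X + Y) j).coeff t
        = (mulVec r X j).coeff t + (mulVec r Y j).coeff t := by
    intro r X Y j t
    have h := congrFun (mulVec_add r X Y) j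
    rw [h]
    exact HahnSeries.coeff_add
  -- surjectivity
  have hsurjΨ : ∀ g : (Fin n → (Finset.Icc (1:ℤ) D) → F) ×
      (Fin n → (Finset.Icc (1:ℤ) D') → F), ∃ A ∈ U F m n, Ψ A = g := by
    rintro ⟨g, g'⟩
    obtain ⟨A, hAU, hA⟩ := exists_target q q' hli D D'
      (fun j t => if h : t ∈ Finset.Icc (1:ℤ) D then g j ⟨t, h⟩ else 0)
      (fun j t => if h : t ∈ Finset.Icc (1:ℤ) D' then g' j ⟨t, h⟩ else 0)
    refine ⟨A, hAU, ?_⟩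
    rw [hΨ, Prod.mk.injEq]
    constructor
    · funext j t
      obtain ⟨ht1, ht2⟩ := Finset.mem_Icc.mp t.2
      rw [hΦ]
      show (mulVec q A j).coeff ↑t = g j t
      rw [(hA j).1 ↑t ht1 ht2, dif_pos t.2]
    · funext j t
      obtain ⟨ht1, ht2⟩ := Finset.mem_Icc.mp t.2
      show (mulVec q' A j).coeff ↑t = g' j t
      rw [(hA j).2 ↑t ht1 ht2, dif_pos t.2]
  have hsurjΦ : ∀ g, ∃ A ∈ U F m n, Φ A = g := by
    intro g
    obtain ⟨A, hAU, hA⟩ := hsurjΨ (g, 0)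
    exact ⟨A, hAU, congrArg Prod.fst hA⟩
  have hsurjΦ' : ∀ g, ∃ A ∈ U F m n, Φ' A = g := by
    intro g
    obtain ⟨A, hAU, hA⟩ := hsurjΨ (0, g)
    exact ⟨A, hAU, congrArg Prod.snd hA⟩
  -- measurability
  have hmeasΦ : ∀ g, MeasurableSet (U F m n ∩ Φ ⁻¹' {g}) := by
    intro g
    have h : Φ ⁻¹' {g} = ⋂ (j : Fin n), ⋂ (t : (Finset.Icc (1:ℤ) D)),
        {A : Fin m → Fin n → LaurentSeries F | (mulVec q A j).coeff ↑t = g j t} := by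
      ext A
      simp only [Set.mem_preimage, Set.mem_singleton_iff, Set.mem_iInter, Set.mem_setOf_eq,
        hΦ, funext_iff]
    rw [h]
    exact measurableSet_U.inter (MeasurableSet.iInter fun j => MeasurableSet.iInter fun t =>
      measurableSet_mulVec_coeff q j ↑t (g j t))
  have hmeasΦ' : ∀ g, MeasurableSet (U F m n ∩ Φ' ⁻¹' {g}) := by
    intro g
    have h : Φ' ⁻¹' {g} = ⋂ (j : Fin n), ⋂ (t : (Finset.Icc (1:ℤ) D')),
        {A : Fin m → Fin n → LaurentSeries F | (mulVec q' A j).coeff ↑t = g j t} := by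
      ext A
      simp only [Set.mem_preimage, Set.mem_singleton_iff, Set.mem_iInter, Set.mem_setOf_eq,
        hΦ', funext_iff]
    rw [h]
    exact measurableSet_U.inter (MeasurableSet.iInter fun j => MeasurableSet.iInter fun t =>
      measurableSet_mulVec_coeff q' j ↑t (g j t))
  have hΨsplit : ∀ (g : Fin n → (Finset.Icc (1:ℤ) D) → F)
      (g' : Fin n → (Finset.Icc (1:ℤ) D') → F),
      U F m n ∩ Ψ ⁻¹' {(g, g')} = (U F m n ∩ Φ ⁻¹' {g}) ∩ (U F m n ∩ Φ' ⁻¹' {g'}) := by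
    intro g g'
    ext A
    simp only [Set.mem_inter_iff, Set.mem_preimage, Set.mem_singleton_iff, hΨ, Prod.mk.injEq]
    tauto
  have hmeasΨ : ∀ g, MeasurableSet (U F m n ∩ Ψ ⁻¹' {g}) := by
    rintro ⟨g, g'⟩
    rw [hΨsplit g g']
    exact (hmeasΦ g).inter (hmeasΦ' g')
  -- ball identifications
  have hBall : BallB (n := n) q ε = U F m n ∩ Φ ⁻¹' {0} := by
    ext A
    show A ∈ U F m n ∧ pdist (mulVec q A) < ε ↔ _
    rw [pdist_lt_iff hn hε hD (mulVec q A)]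
    simp only [Set.mem_inter_iff, Set.mem_preimage, Set.mem_singleton_iff, hΦ, funext_iff]
    constructor
    · rintro ⟨hAU, hA⟩
      refine ⟨hAU, fun j t => ?_⟩
      obtain ⟨ht1, ht2⟩ := Finset.mem_Icc.mp t.2
      exact hA j ↑t ht1 ht2
    · rintro ⟨hAU, hA⟩
      refine ⟨hAU, fun j t ht1 ht2 => ?_⟩
      exact hA j ⟨t, Finset.mem_Icc.mpr ⟨ht1, ht2⟩⟩
  have hBall' : BallB (n := n) q' ε' = U F m n ∩ Φ' ⁻¹' {0} := by
    ext A
    show A ∈ U F m n ∧ pdist (mulVec q' A) < ε' ↔ _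
    rw [pdist_lt_iff hn hε' hD' (mulVec q' A)]
    simp only [Set.mem_inter_iff, Set.mem_preimage, Set.mem_singleton_iff, hΦ', funext_iff]
    constructor
    · rintro ⟨hAU, hA⟩
      refine ⟨hAU, fun j t => ?_⟩
      obtain ⟨ht1, ht2⟩ := Finset.mem_Icc.mp t.2
      exact hA j ↑t ht1 ht2
    · rintro ⟨hAU, hA⟩
      refine ⟨hAU, fun j t ht1 ht2 => ?_⟩
      exact hA j ⟨t, Finset.mem_Icc.mpr ⟨ht1, ht2⟩⟩
  have hBallInt : BallB (n := n) q ε ∩ BallB q' ε' = U F m n ∩ Ψ ⁻¹' {0} := by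
    rw [hBall, hBall', show ((0 : (Fin n → (Finset.Icc (1:ℤ) D) → F) ×
      (Fin n → (Finset.Icc (1:ℤ) D') → F))) = (0, 0) from rfl, hΨsplit 0 0]
  -- measures
  have h1 := measure_fiber μ hinv hU Φ
    (fun X Y => funext fun j => funext fun t => haddΦ q X Y j ↑t) hmeasΦ hsurjΦ 0
  have h2 := measure_fiber μ hinv hU Φ'
    (fun X Y => funext fun j => funext fun t => haddΦ q' X Y j ↑t) hmeasΦ' hsurjΦ' 0
  have h3 := measure_fiber μ hinv hU Ψ
    (fun X Y => Prod.ext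
      (funext fun j => funext fun t => haddΦ q X Y j ↑t)
      (funext fun j => funext fun t => haddΦ q' X Y j ↑t)) hmeasΨ hsurjΨ 0
  rw [hBallInt, hBall, hBall', h1, h2, h3]
  rw [Fintype.card_prod, Nat.cast_mul]
  rw [ENNReal.mul_inv (Or.inl (by simp [Fintype.card_ne_zero])) (Or.inl (ENNReal.natCast_ne_top _))]

end FFapprox
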